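/- The map ψ_T: U(T) → K^× defined by ψ_T(u) = θ(Σ_{(i,j)∈X(T)} c_{ij}(u)), where c_{ij}(u) is the coefficient of v_i in u·v_j, is a group homomorphism. -/

import Mathlib

/-- The column-stabilizer-like subgroup `U(T)` of an `F^n`-tableau `T` of shape `l`
(with entries `entry (r,c)` for boxes `c < l r`): those `g` with
`g·v − v` in the span of the entries strictly left of `v`, for every entry `v`. -/
def Ugrp (F : Type*) [Field F] (n : ℕ) (l : ℕ → ℕ)
    (entry : ℕ × ℕ → (Fin n → F)) : Set (GL (Fin n) F) :=
  {g | ∀ r c, c < l r →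
    (g : Matrix (Fin n) (Fin n) F).mulVec (entry (r, c)) - entry (r, c) ∈
      Submodule.span F {v | ∃ c', c' < c ∧ v = entry (r, c')}}

/-- The row-stabilizer-like subgroup `P(T)`: those `g` with `g·v` in the span of
the entries nonstrictly right of `v` (i.e. in a column at least that of `v`). -/
def Pgrp (F : Type*) [Field F] (n : ℕ) (l : ℕ → ℕ)
    (entry : ℕ × ℕ → (Fin n → F)) : Set (GL (Fin n) F) :=
  {g | ∀ r c, c < l r →
    (g : Matrix (Fin n) (Fin n) F).mulVec (entry (r, c)) ∈
      Submodule.span F {v | ∃ r' c', c ≤ c' ∧ c' < l r' ∧ v = entry (r', c')}}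



section Aux
variable {F : Type*} [Field F] {n : ℕ} {l : ℕ → ℕ}
  {entry : ℕ × ℕ → (Fin n → F)}
  (hindep : LinearIndependent F (fun b : {p : ℕ × ℕ // p.2 < l p.1} => entry b.1))
  {boxes : Finset (ℕ × ℕ)} (hboxes : ∀ p : ℕ × ℕ, p ∈ boxes ↔ p.2 < l p.1)

include hindep hboxes

lemma uniq_aux (f : ℕ × ℕ → F) (hf : ∑ b ∈ boxes, f b • entry b = 0) :
    ∀ b ∈ boxes, f b = 0 := by
  intro b hb
  have h := linearIndependent_iff'.mp hindep
    (boxes.subtype (fun p => p.2 < l p.1)) (fun i => f i.1)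
  have hsum : ∑ i ∈ boxes.subtype (fun p => p.2 < l p.1), f i.1 • entry i.1 =
      ∑ b ∈ boxes, f b • entry b := by
    rw [Finset.sum_subtype_eq_sum_filter (fun p => f p • entry p)]
    apply Finset.sum_congr _ (fun _ _ => rfl)
    rw [Finset.filter_true_of_mem (fun p hp => (hboxes p).mp hp)]
  exact h (by rw [hsum]; exact hf) ⟨b, (hboxes b).mp hb⟩
    (Finset.mem_subtype.mpr hb)

lemma uniq_aux2 (f g : ℕ × ℕ → F)
    (hfg : ∑ b ∈ boxes, f b • entry b = ∑ b ∈ boxes, g b • entry b) :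
    ∀ b ∈ boxes, f b = g b := by
  intro b hb
  have := uniq_aux hindep hboxes (fun q => f q - g q) (by
    simp only [sub_smul, Finset.sum_sub_distrib, hfg, sub_self]) b hb
  simpa [sub_eq_zero] using this

lemma entry_inj {q₁ q₂ : ℕ × ℕ} (h₁ : q₁ ∈ boxes) (h₂ : q₂ ∈ boxes)
    (h : entry q₁ = entry q₂) : q₁ = q₂ := by
  have := hindep.injective (a₁ := ⟨q₁, (hboxes q₁).mp h₁⟩) (a₂ := ⟨q₂, (hboxes q₂).mp h₂⟩) h
  exact Subtype.ext_iff.mp this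

end Aux

section Aux2
variable {F : Type*} [Field F] {n : ℕ} {l : ℕ → ℕ}
  {entry : ℕ × ℕ → (Fin n → F)}
  (hindep : LinearIndependent F (fun b : {p : ℕ × ℕ // p.2 < l p.1} => entry b.1))
  {boxes : Finset (ℕ × ℕ)} (hboxes : ∀ p : ℕ × ℕ, p ∈ boxes ↔ p.2 < l p.1)
  {coeff : GL (Fin n) F → ℕ × ℕ → ℕ × ℕ → F}
  (hcoeff : ∀ u : GL (Fin n) F, ∀ b ∈ boxes,
      (u : Matrix (Fin n) (Fin n) F).mulVec (entry b) =
        ∑ b' ∈ boxes, coeff u b' b • entry b')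

include hindep hboxes hcoeff

lemma ustruct {u : GL (Fin n) F} (hu : u ∈ Ugrp F n l entry) {b : ℕ × ℕ}
    (hb : b ∈ boxes) :
    coeff u b b = 1 ∧
      ∀ q ∈ boxes, q ≠ b → ¬(q.1 = b.1 ∧ q.2 < b.2) → coeff u q b = 0 := by
  classical
  have hmem := hu b.1 b.2 ((hboxes b).mp hb)
  set s : Finset (ℕ × ℕ) := boxes.filter (fun q => q.1 = b.1 ∧ q.2 < b.2) with hs
  have hsub : {v | ∃ c', c' < b.2 ∧ v = entry (b.1, c')} ⊆ ↑(s.image entry) := by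
    rintro v ⟨c', hc', rfl⟩
    have hbox : (b.1, c') ∈ boxes := (hboxes _).mpr (lt_trans hc' ((hboxes b).mp hb))
    exact Finset.mem_coe.mpr (Finset.mem_image.mpr ⟨(b.1, c'), by
      simp [hs, Finset.mem_filter, hbox, hc'], rfl⟩)
  have hmem2 : (u : Matrix (Fin n) (Fin n) F).mulVec (entry b) - entry b ∈
      Submodule.span F (↑(s.image entry) : Set (Fin n → F)) :=
    Submodule.span_mono hsub (by simpa using hmem)
  obtain ⟨f, -, hf⟩ := Submodule.mem_span_finset.mp hmem2
  have hinj : ∀ q₁ ∈ s, ∀ q₂ ∈ s, entry q₁ = entry q₂ → q₁ = q₂ := fun q₁ h₁ q₂ h₂ h =>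
    entry_inj hindep hboxes (Finset.mem_filter.mp h₁).1 (Finset.mem_filter.mp h₂).1 h
  rw [Finset.sum_image hinj] at hf
  set g : ℕ × ℕ → F := fun q => if q.1 = b.1 ∧ q.2 < b.2 then f (entry q) else 0 with hg
  have hf2 : ∑ q ∈ boxes, g q • entry q =
      (u : Matrix (Fin n) (Fin n) F).mulVec (entry b) - entry b := by
    rw [← hf, hs, Finset.sum_filter]
    apply Finset.sum_congr rfl
    intro q hq
    by_cases h : q.1 = b.1 ∧ q.2 < b.2 <;> simp [hg, h]
  have h1 : ∑ q ∈ boxes, ((if q = b then (1:F) else 0) • entry q) = entry b := by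
    simp [ite_smul, Finset.sum_ite_eq' boxes b, hb]
  have hexp : (u : Matrix (Fin n) (Fin n) F).mulVec (entry b) =
      ∑ q ∈ boxes, (g q + if q = b then 1 else 0) • entry q := by
    simp only [add_smul, Finset.sum_add_distrib, hf2, h1]
    abel
  have key := uniq_aux2 hindep hboxes _ _ ((hcoeff u b hb).symm.trans hexp)
  constructor
  · simpa [hg] using key b hb
  · intro q hq hne hcond
    simpa [hg, if_neg hcond, if_neg hne] using key q hq

lemma coeff_mul {u₁ u₂ : GL (Fin n) F} {q b : ℕ × ℕ} (hq : q ∈ boxes) (hb : b ∈ boxes) :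
    coeff (u₁ * u₂) q b = ∑ q' ∈ boxes, coeff u₁ q q' * coeff u₂ q' b := by
  have hexp : ((u₁ * u₂ : GL (Fin n) F) : Matrix (Fin n) (Fin n) F).mulVec (entry b) =
      ∑ q ∈ boxes, (∑ q' ∈ boxes, coeff u₁ q q' * coeff u₂ q' b) • entry q := by
    rw [Units.val_mul, ← Matrix.mulVec_mulVec, hcoeff u₂ b hb]
    rw [show (u₁ : Matrix (Fin n) (Fin n) F).mulVec (∑ b' ∈ boxes, coeff u₂ b' b • entry b')
        = ∑ b' ∈ boxes, coeff u₂ b' b • (u₁ : Matrix (Fin n) (Fin n) F).mulVec (entry b') by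
      simp only [← Matrix.mulVecLin_apply, map_sum, map_smul]]
    have : ∀ b' ∈ boxes, coeff u₂ b' b • (u₁ : Matrix (Fin n) (Fin n) F).mulVec (entry b')
        = ∑ q ∈ boxes, (coeff u₁ q b' * coeff u₂ b' b) • entry q := by
      intro b' hb'
      rw [hcoeff u₁ b' hb', Finset.smul_sum]
      apply Finset.sum_congr rfl
      intro q _
      rw [smul_smul, mul_comm]
    rw [Finset.sum_congr rfl this, Finset.sum_comm]
    apply Finset.sum_congr rfl
    intro q _
    rw [Finset.sum_smul]
  exact uniq_aux2 hindep hboxes _ _ ((hcoeff (u₁*u₂) b hb).symm.trans hexp) q hq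
end Aux2

section Main
variable {F : Type*} [Field F] {n : ℕ} {l : ℕ → ℕ}
  {entry : ℕ × ℕ → (Fin n → F)}
  (hindep : LinearIndependent F (fun b : {p : ℕ × ℕ // p.2 < l p.1} => entry b.1))
  {boxes : Finset (ℕ × ℕ)} (hboxes : ∀ p : ℕ × ℕ, p ∈ boxes ↔ p.2 < l p.1)
  {coeff : GL (Fin n) F → ℕ × ℕ → ℕ × ℕ → F}
  (hcoeff : ∀ u : GL (Fin n) F, ∀ b ∈ boxes,
      (u : Matrix (Fin n) (Fin n) F).mulVec (entry b) =
        ∑ b' ∈ boxes, coeff u b' b • entry b')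

include hindep hboxes hcoeff

lemma coeff_one {q b : ℕ × ℕ} (hq : q ∈ boxes) (hb : b ∈ boxes) :
    coeff 1 q b = if q = b then 1 else 0 := by
  classical
  have hexp : ((1 : GL (Fin n) F) : Matrix (Fin n) (Fin n) F).mulVec (entry b) =
      ∑ q ∈ boxes, (if q = b then (1:F) else 0) • entry q := by
    simp [ite_smul, Finset.sum_ite_eq' boxes b, hb, Matrix.one_mulVec]
  exact uniq_aux2 hindep hboxes _ _ ((hcoeff 1 b hb).symm.trans hexp) q hq

lemma coeff_mul_adj {u₁ u₂ : GL (Fin n) F}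
    (hu₁ : u₁ ∈ Ugrp F n l entry) (hu₂ : u₂ ∈ Ugrp F n l entry)
    {p : ℕ × ℕ} (hp : p ∈ boxes) (hpb : (p.1, p.2 + 1) ∈ boxes) :
    coeff (u₁ * u₂) p (p.1, p.2 + 1) =
      coeff u₁ p (p.1, p.2 + 1) + coeff u₂ p (p.1, p.2 + 1) := by
  set b : ℕ × ℕ := (p.1, p.2 + 1) with hbdef
  have hpb' : p ≠ b := by
    intro h; exact absurd (congrArg Prod.snd h) (by simp [hbdef])
  rw [coeff_mul hindep hboxes hcoeff hp hpb]
  rw [Finset.sum_eq_add_of_mem p b hp hpb hpb' ?_]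
  · rw [(ustruct hindep hboxes hcoeff hu₁ hp).1, (ustruct hindep hboxes hcoeff hu₂ hpb).1,
      one_mul, mul_one, add_comm]
  · intro q' hq' hne
    by_cases h1 : coeff u₁ p q' = 0
    · rw [h1, zero_mul]
    by_cases h2 : coeff u₂ q' b = 0
    · rw [h2, mul_zero]
    exfalso
    -- coeff u₁ p q' ≠ 0, p ≠ q'  ⇒  p.1 = q'.1 ∧ p.2 < q'.2
    have hA : p.1 = q'.1 ∧ p.2 < q'.2 := by
      by_contra hc
      exact h1 ((ustruct hindep hboxes hcoeff hu₁ hq').2 p hp (fun h => hne.1 h.symm) hc)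
    have hB : q'.1 = b.1 ∧ q'.2 < b.2 := by
      by_contra hc
      exact h2 ((ustruct hindep hboxes hcoeff hu₂ hpb).2 q' hq' hne.2 hc)
    have : q'.2 < p.2 + 1 := by simpa [hbdef] using hB.2
    omega
end Main

/-- The map `ψ_T(u) = θ(Σ_{(i,j)∈X(T)} c_{ij}(u))`, where the sum is over pairs of
horizontally adjacent boxes and `c_{ij}(u)` is the coefficient of `v_i` in `u·v_j`,
is a group homomorphism on `U(T)`. -/
theorem psi_is_hom (F : Type*) [Field F] [Fintype F] (K : Type*) [Field K]
    (θ : Multiplicative F →* Kˣ) (hθ : θ ≠ 1)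
    (n : ℕ) (l : ℕ → ℕ)
    (entry : ℕ × ℕ → (Fin n → F))
    (hindep : LinearIndependent F (fun b : {p : ℕ × ℕ // p.2 < l p.1} => entry b.1))
    (boxes : Finset (ℕ × ℕ)) (hboxes : ∀ p : ℕ × ℕ, p ∈ boxes ↔ p.2 < l p.1)
    (coeff : GL (Fin n) F → ℕ × ℕ → ℕ × ℕ → F)
    (hcoeff : ∀ u : GL (Fin n) F, ∀ b ∈ boxes,
      (u : Matrix (Fin n) (Fin n) F).mulVec (entry b) =
        ∑ b' ∈ boxes, coeff u b' b • entry b') :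
    (fun u : GL (Fin n) F => θ (Multiplicative.ofAdd
        (∑ p ∈ boxes.filter (fun p => (p.1, p.2 + 1) ∈ boxes),
          coeff u p (p.1, p.2 + 1)))) 1 = 1 ∧
    ∀ u₁ ∈ Ugrp F n l entry, ∀ u₂ ∈ Ugrp F n l entry,
      (fun u : GL (Fin n) F => θ (Multiplicative.ofAdd
        (∑ p ∈ boxes.filter (fun p => (p.1, p.2 + 1) ∈ boxes),
          coeff u p (p.1, p.2 + 1)))) (u₁ * u₂) =
      (fun u : GL (Fin n) F => θ (Multiplicative.ofAdd
        (∑ p ∈ boxes.filter (fun p => (p.1, p.2 + 1) ∈ boxes),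
          coeff u p (p.1, p.2 + 1)))) u₁ *
      (fun u : GL (Fin n) F => θ (Multiplicative.ofAdd
        (∑ p ∈ boxes.filter (fun p => (p.1, p.2 + 1) ∈ boxes),
          coeff u p (p.1, p.2 + 1)))) u₂ := by
  classical
  constructor
  · have hz : ∑ p ∈ boxes.filter (fun p => (p.1, p.2 + 1) ∈ boxes),
        coeff 1 p (p.1, p.2 + 1) = 0 := by
      apply Finset.sum_eq_zero
      intro p hp
      obtain ⟨hp1, hp2⟩ := Finset.mem_filter.mp hp
      rw [coeff_one hindep hboxes hcoeff hp1 hp2]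
      have : p ≠ (p.1, p.2 + 1) := by
        intro h
        have := congrArg Prod.snd h
        simp at this
      rw [if_neg this]
    simp only [hz, ofAdd_zero, map_one]
  · intro u₁ hu₁ u₂ hu₂
    simp only []
    have hsum : ∑ p ∈ boxes.filter (fun p => (p.1, p.2 + 1) ∈ boxes),
        coeff (u₁ * u₂) p (p.1, p.2 + 1) =
        (∑ p ∈ boxes.filter (fun p => (p.1, p.2 + 1) ∈ boxes),
          coeff u₁ p (p.1, p.2 + 1)) +
        (∑ p ∈ boxes.filter (fun p => (p.1, p.2 + 1) ∈ boxes),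
          coeff u₂ p (p.1, p.2 + 1)) := by
      rw [← Finset.sum_add_distrib]
      apply Finset.sum_congr rfl
      intro p hp
      obtain ⟨hp1, hp2⟩ := Finset.mem_filter.mp hp
      exact coeff_mul_adj hindep hboxes hcoeff hu₁ hu₂ hp1 hp2
    rw [hsum, ofAdd_add, map_mul]
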